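/- Marker Lemma: Let G be a countable group, X a G-subshift over a finite alphabet, S, T ⊆ G finite, and 1 ≤ k ≤ |S|. Then there exists a clopen set F ⊆ X such that (1) the collection {σˢ(F) : s ∈ S} is (k+1)-fold disjoint (every k+1 distinct shifts have empty intersection), and (2) if x ∉ ⋃_{s ∈ S⁻¹S} σˢ(F), then the pattern x(T) has k periods from S⁻¹S. -/

import Mathlib

open Pointwise

/-- The shift action of `G` on `𝒜^G`: `(σᵍ x)(h) = x(hg)`. -/
def shiftMap {G A : Type*} [Group G] (g : G) (x : G → A) : G → A := fun h => x (h * g)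

/-- A pattern `w : T → 𝒜` has `k` periods from `S` if there are `k` distinct
elements `p ∈ S` such that `w(g) = w(g·p)` whenever `g, g·p ∈ T`. -/
def HasPeriods {G : Type*} [Group G] {A : Type*} (k : ℕ) (S T : Finset G)
    (w : T → A) : Prop :=
  ∃ P : Finset G, P ⊆ S ∧ P.card = k ∧
    ∀ p ∈ P, ∀ (g : G) (hg : g ∈ T) (hgp : g * p ∈ T), w ⟨g, hg⟩ = w ⟨g * p, hgp⟩

namespace MarkerAux

variable {G A : Type*} [Group G]

theorem shift_shift (g h : G) (x : G → A) :
    shiftMap g (shiftMap h x) = shiftMap (g * h) x := by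
  funext a; simp [shiftMap, mul_assoc]

theorem shift_one (x : G → A) : shiftMap (1 : G) x = x := by
  funext a; simp [shiftMap]

theorem mem_shift_image (s : G) (F : Set (G → A)) (y : G → A) :
    y ∈ shiftMap s '' F ↔ shiftMap s⁻¹ y ∈ F := by
  constructor
  · rintro ⟨z, hz, rfl⟩
    rwa [shift_shift, inv_mul_cancel, shift_one]
  · intro h
    exact ⟨shiftMap s⁻¹ y, h, by rw [shift_shift, mul_inv_cancel, shift_one]⟩

theorem continuous_shift [TopologicalSpace A] (g : G) :
    Continuous (shiftMap g : (G → A) → (G → A)) :=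
  continuous_pi fun h => continuous_apply (h * g)

variable (X : Set (G → A)) (k : ℕ) (Q T : Finset G)

/-- The cylinder at pattern `lam` consisting of points of `X` whose `T`-pattern is
`lam` and lacks `k` periods from `Q`. -/
def cylB (lam : T → A) : Set (G → A) :=
  {x | x ∈ X ∧ (∀ g : T, x ↑g = lam g) ∧ ¬ HasPeriods k Q T (fun g : T => x ↑g)}

/-- Greedy marker construction. -/
def build : List (T → A) → Set (G → A)
  | [] => ∅
  | lam :: L =>
      build L ∪ (cylB X k Q T lam \ ⋃ p ∈ Q, shiftMap p '' build L)

theorem build_subset_X : ∀ l : List (T → A), build X k Q T l ⊆ X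
  | [] => by simp [build]
  | lam :: L => by
      rw [build]
      apply Set.union_subset (build_subset_X L)
      intro x hx
      exact hx.1.1

theorem build_mono_cons (lam : T → A) (L : List (T → A)) :
    build X k Q T L ⊆ build X k Q T (lam :: L) := by
  rw [build]; exact Set.subset_union_left

theorem build_suffix_subset : ∀ {l₁ l₂ : List (T → A)}, l₁ <:+ l₂ →
    build X k Q T l₁ ⊆ build X k Q T l₂ := by
  intro l₁ l₂
  induction l₂ with
  | nil => intro h; rw [List.suffix_nil.mp h]
  | cons hd tl ih =>
      intro h
      rcases List.suffix_cons_iff.mp h with h | h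
      · rw [h]
      · exact (ih h).trans (build_mono_cons X k Q T hd tl)

theorem suffix_total {α : Type*} : ∀ {l l₁ l₂ : List α}, l₁ <:+ l → l₂ <:+ l →
    l₁ <:+ l₂ ∨ l₂ <:+ l₁ := by
  intro l
  induction l with
  | nil => intro l₁ l₂ h₁ h₂; rw [List.suffix_nil.mp h₁]; exact Or.inl List.nil_suffix
  | cons hd tl ih =>
      intro l₁ l₂ h₁ h₂
      rcases List.suffix_cons_iff.mp h₁ with h₁' | h₁'
      · subst h₁'; exact Or.inr h₂
      · rcases List.suffix_cons_iff.mp h₂ with h₂' | h₂'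
        · subst h₂'; exact Or.inl h₁
        · exact ih h₁' h₂'

/-- Minimal stage at which a point enters `build`. -/
theorem exists_min_stage : ∀ {l : List (T → A)} {z : G → A}, z ∈ build X k Q T l →
    ∃ lam L, (lam :: L) <:+ l ∧ z ∈ cylB X k Q T lam ∧
      (∀ p ∈ Q, z ∉ shiftMap p '' build X k Q T L) ∧ z ∈ build X k Q T (lam :: L) := by
  intro l
  induction l with
  | nil => intro z hz; simp [build] at hz
  | cons hd tl ih =>
      intro z hz
      rw [build] at hz
      rcases hz with hz | hz
      · obtain ⟨lam, L, hsuf, h1, h2, h3⟩ := ih hz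
        exact ⟨lam, L, hsuf.trans (List.suffix_cons hd tl), h1, h2, h3⟩
      · refine ⟨hd, tl, List.suffix_refl _, hz.1, ?_, ?_⟩
        · intro p hp hmem
          exact hz.2 (Set.mem_biUnion hp hmem)
        · rw [build]; exact Or.inr hz

theorem build_cover (x : G → A) (hx : x ∈ X)
    (hbad : ¬ HasPeriods k Q T (fun g : T => x ↑g)) :
    ∀ l : List (T → A), (fun g : T => x ↑g) ∈ l →
      x ∈ build X k Q T l ∪ ⋃ p ∈ Q, shiftMap p '' build X k Q T l := by
  intro l
  induction l with
  | nil => intro h; simp at h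
  | cons hd tl ih =>
      intro hmem
      rcases List.mem_cons.mp hmem with heq | hmem'
      · by_cases hcase : x ∈ ⋃ p ∈ Q, shiftMap p '' build X k Q T tl
        · right
          rcases Set.mem_iUnion₂.mp hcase with ⟨p, hp, hmem2⟩
          exact Set.mem_biUnion hp
            ((Set.image_mono (build_mono_cons X k Q T hd tl)) hmem2)
        · left
          rw [build]
          right
          refine ⟨⟨hx, ?_, hbad⟩, hcase⟩
          intro g; rw [← heq]
      · rcases ih hmem' with h | h
        · exact Or.inl (build_mono_cons X k Q T hd tl h)
        · right
          rcases Set.mem_iUnion₂.mp h with ⟨p, hp, hmem2⟩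
          exact Set.mem_biUnion hp
            ((Set.image_mono (build_mono_cons X k Q T hd tl)) hmem2)

variable [TopologicalSpace A] [DiscreteTopology A] [Fintype A] [DecidableEq G]

theorem isClopen_pattern_set (hXi : ∀ g : G, ∀ x ∈ X, shiftMap g x ∈ X)
    (p : (T → A) → Prop) :
    IsClopen (Subtype.val ⁻¹' {x : G → A | x ∈ X ∧ p (fun g : T => x ↑g)} : Set X) := by
  have hρ : Continuous (fun x : X => (fun g : T => (x : G → A) ↑g)) :=
    continuous_pi fun g => (continuous_apply (g : G)).comp continuous_subtype_val
  have : (Subtype.val ⁻¹' {x : G → A | x ∈ X ∧ p (fun g : T => x ↑g)} : Set X) =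
      (fun x : X => (fun g : T => (x : G → A) ↑g)) ⁻¹' {v | p v} := by
    ext x
    simp [x.2]
  rw [this]
  exact (isClopen_discrete _).preimage hρ

theorem isClopen_shift_preimage (hXi : ∀ g : G, ∀ x ∈ X, shiftMap g x ∈ X)
    (p : G) (C : Set (G → A)) (hC : IsClopen (Subtype.val ⁻¹' C : Set X)) :
    IsClopen (Subtype.val ⁻¹' (shiftMap p '' C) : Set X) := by
  have hΦc : Continuous (fun x : X => (⟨shiftMap p⁻¹ ↑x, hXi p⁻¹ ↑x x.2⟩ : X)) :=
    Continuous.subtype_mk ((continuous_shift p⁻¹).comp continuous_subtype_val) _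
  have : (Subtype.val ⁻¹' (shiftMap p '' C) : Set X) =
      (fun x : X => (⟨shiftMap p⁻¹ ↑x, hXi p⁻¹ ↑x x.2⟩ : X)) ⁻¹' (Subtype.val ⁻¹' C) := by
    ext x
    simp only [Set.mem_preimage]
    exact mem_shift_image p C x
  rw [this]
  exact hC.preimage hΦc

theorem isClopen_build (hXi : ∀ g : G, ∀ x ∈ X, shiftMap g x ∈ X) :
    ∀ l : List (T → A), IsClopen (Subtype.val ⁻¹' build X k Q T l : Set X)
  | [] => by simp only [build, Set.preimage_empty]; exact isClopen_empty
  | lam :: L => by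
      rw [build]
      have ih := isClopen_build hXi L
      rw [Set.preimage_union]
      apply IsClopen.union ih
      rw [Set.preimage_diff]
      apply IsClopen.diff
      · have : cylB X k Q T lam =
            {x : G → A | x ∈ X ∧ (fun v : T → A =>
              (∀ g : T, v g = lam g) ∧ ¬ HasPeriods k Q T v) (fun g : T => x ↑g)} := by
          ext x; rfl
        rw [this]
        exact isClopen_pattern_set X T hXi (fun v : ↥T → A =>
          (∀ g : ↥T, v g = lam g) ∧ ¬ HasPeriods k Q T v)
      · rw [Set.preimage_iUnion₂]
        exact (Q.finite_toSet).isClopen_biUnion fun p hp =>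
          isClopen_shift_preimage X hXi p _ ih

end MarkerAux

open MarkerAux in
/-- Marker Lemma: for a `G`-subshift `X`, finite `S, T ⊆ G` and `1 ≤ k ≤ |S|`,
there is a clopen `F ⊆ X` such that the shifts `{σˢ(F) : s ∈ S}` are `(k+1)`-fold
disjoint, and any `x ∈ X` avoiding `⋃_{s ∈ S⁻¹S} σˢ(F)` has `x(T)` with `k` periods
from `S⁻¹S`. -/
theorem marker_lemma {G A : Type*} [Group G] [Countable G] [DecidableEq G]
    [Fintype A] [TopologicalSpace A] [DiscreteTopology A]
    (X : Set (G → A)) (hXc : IsClosed X)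
    (hXi : ∀ g : G, ∀ x ∈ X, shiftMap g x ∈ X)
    (S T : Finset G) (k : ℕ) (hk1 : 1 ≤ k) (hk2 : k ≤ S.card) :
    ∃ F : Set (G → A), F ⊆ X ∧ IsClopen ((↑·) ⁻¹' F : Set X) ∧
      (∀ P : Finset G, P ⊆ S → P.card = k + 1 → (⋂ s ∈ P, shiftMap s '' F) = ∅) ∧
      (∀ x ∈ X, x ∉ (⋃ s ∈ S⁻¹ * S, shiftMap s '' F) →
        HasPeriods k (S⁻¹ * S) T (fun g : T => x g)) := by
  classical
  set Q : Finset G := S⁻¹ * S with hQ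
  -- S is nonempty, so 1 ∈ Q
  have hS : S.Nonempty := Finset.card_pos.mp (lt_of_lt_of_le hk1 hk2)
  obtain ⟨s₁, hs₁⟩ := hS
  have h1Q : (1 : G) ∈ Q := by
    have := Finset.mul_mem_mul (Finset.inv_mem_inv hs₁) hs₁
    rwa [inv_mul_cancel] at this
  set lfull : List (↥T → A) := (Finset.univ : Finset (↥T → A)).toList
    with hlfull
  refine ⟨build X k Q T lfull, build_subset_X X k Q T lfull, isClopen_build X k Q T hXi lfull,
    ?_, ?_⟩
  · -- (k+1)-fold disjointness
    intro P hPS hPcard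
    rw [Set.eq_empty_iff_forall_notMem]
    intro y hy
    have hz : ∀ s ∈ P, shiftMap s⁻¹ y ∈ build X k Q T lfull := by
      intro s hs
      exact (mem_shift_image s _ y).mp (Set.mem_iInter₂.mp hy s hs)
    have key : ∀ s : G, s ∈ P → ∃ q : (↥T → A) × List (↥T → A),
        (q.1 :: q.2) <:+ lfull ∧ shiftMap s⁻¹ y ∈ cylB X k Q T q.1 ∧
        (∀ p ∈ Q, shiftMap s⁻¹ y ∉ shiftMap p '' build X k Q T q.2) ∧
        shiftMap s⁻¹ y ∈ build X k Q T (q.1 :: q.2) := by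
      intro s hs
      obtain ⟨lam, L, h1, h2, h3, h4⟩ := exists_min_stage X k Q T (hz s hs)
      exact ⟨⟨lam, L⟩, h1, h2, h3, h4⟩
    choose f hf1 hf2 hf3 hf4 using key
    -- z s (g) = y (g * s⁻¹) definitionally
    have hPne : P.Nonempty := Finset.card_pos.mp (by omega)
    -- cross-stage contradiction
    have cross : ∀ s (hs : s ∈ P), ∀ t (ht : t ∈ P),
        ((f s hs).1 :: (f s hs).2) <:+ (f t ht).2 → False := by
      intro s hs t ht hsuf
      have hzs : shiftMap s⁻¹ y ∈ build X k Q T (f t ht).2 :=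
        build_suffix_subset X k Q T hsuf (hf4 s hs)
      have hp : t⁻¹ * s ∈ Q := Finset.mul_mem_mul (Finset.inv_mem_inv (hPS ht)) (hPS hs)
      apply hf3 t ht (t⁻¹ * s) hp
      refine ⟨shiftMap s⁻¹ y, hzs, ?_⟩
      rw [shift_shift]
      congr 1
      group
    by_cases hsame : ∀ s (hs : s ∈ P), ∀ t (ht : t ∈ P), f s hs = f t ht
    · -- all at same stage: derive k+1 periods, contradicting badness
      obtain ⟨s₀, hs₀⟩ := hPne
      have hbad := (hf2 s₀ hs₀).2.2
      apply hbad
      -- the pattern of z s₀ on T equals lam₀ = (f s₀ hs₀).1, as does that of every z t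
      set lam₀ := (f s₀ hs₀).1 with hlam₀
      have hpat : ∀ t (ht : t ∈ P), ∀ g : ↥T,
          shiftMap t⁻¹ y ↑g = lam₀ g := by
        intro t ht g
        have := (hf2 t ht).2.1 g
        rw [this, hsame t ht s₀ hs₀]
      -- k+1 distinct candidate periods
      have hinj : Function.Injective (fun t : G => s₀⁻¹ * t) := mul_right_injective s₀⁻¹
      set P' : Finset G := P.image (fun t => s₀⁻¹ * t) with hP'
      have hP'card : P'.card = k + 1 := by
        rw [hP', Finset.card_image_of_injective _ hinj, hPcard]
      have hP'Q : P' ⊆ Q := by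
        intro p hp
        rw [hP', Finset.mem_image] at hp
        obtain ⟨t, ht, rfl⟩ := hp
        exact Finset.mul_mem_mul (Finset.inv_mem_inv (hPS hs₀)) (hPS ht)
      obtain ⟨P'', hP''sub, hP''card⟩ :=
        Finset.exists_subset_card_eq (show k ≤ P'.card by omega)
      refine ⟨P'', hP''sub.trans hP'Q, hP''card, ?_⟩
      intro p hp g hg hgp
      -- p = s₀⁻¹ * t with t ∈ P
      have hp' : p ∈ P' := hP''sub hp
      rw [hP', Finset.mem_image] at hp'
      obtain ⟨t, ht, rfl⟩ := hp'
      -- goal: z s₀ g = z s₀ (g * (s₀⁻¹ t))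
      show shiftMap s₀⁻¹ y g = shiftMap s₀⁻¹ y (g * (s₀⁻¹ * t))
      have e1 : shiftMap s₀⁻¹ y (g * (s₀⁻¹ * t)) = lam₀ ⟨g * (s₀⁻¹ * t), hgp⟩ :=
        hpat s₀ hs₀ ⟨g * (s₀⁻¹ * t), hgp⟩
      have e2 : shiftMap t⁻¹ y (g * (s₀⁻¹ * t)) = lam₀ ⟨g * (s₀⁻¹ * t), hgp⟩ :=
        hpat t ht ⟨g * (s₀⁻¹ * t), hgp⟩
      rw [e1, ← e2]
      show y (g * s₀⁻¹) = y (g * (s₀⁻¹ * t) * t⁻¹)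
      congr 1
      group
    · -- two distinct stages: cross-stage contradiction
      push_neg at hsame
      obtain ⟨s, hs, t, ht, hne⟩ := hsame
      have htot := suffix_total (hf1 s hs) (hf1 t ht)
      rcases htot with h | h
      · rcases List.suffix_cons_iff.mp h with h' | h'
        · apply hne
          have h1 := List.head_eq_of_cons_eq h'
          have h2 := List.tail_eq_of_cons_eq h'
          exact Prod.ext h1 h2
        · exact cross s hs t ht h'
      · rcases List.suffix_cons_iff.mp h with h' | h'
        · apply hne
          have h1 := List.head_eq_of_cons_eq h'
          have h2 := List.tail_eq_of_cons_eq h'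
          exact (Prod.ext h1 h2).symm
        · exact cross t ht s hs h'
  · -- coverage / periods
    intro x hx hxcov
    by_contra hbad
    have hmem : (fun g : ↥T => x ↑g) ∈ lfull :=
      Finset.mem_toList.mpr (Finset.mem_univ _)
    rcases build_cover X k Q T x hx hbad lfull hmem with h | h
    · apply hxcov
      apply Set.mem_biUnion h1Q
      exact ⟨x, h, shift_one x⟩
    · exact hxcov h
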